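/- (Interpolation form of the OU covariance for 2×2 matrices.) Let A be a real invertible 2×2 matrix with s := tr(A)/2, det(A − s·I) < 0, and q := √(−det(A − s·I)) > 0, and let Σ be a real 2×2 matrix. Setting a(t) := e^{st}·(cosh(qt) − s·sinh(qt)/q), b(t) := e^{st}·sinh(qt)/q, s(t) := 1 − a(−2t), and i(t) := −(1/2)·b(−2t), one has (1/2)·A⁻¹·(I − exp(−2tA))·Σ = s(t)·(1/2)·A⁻¹Σ + i(t)·Σ for every t ∈ ℝ. -/

import Mathlib

open Matrix Real

lemma exp_sq_smul_one (B : Matrix (Fin 2) (Fin 2) ℝ) (q : ℝ) (hq : q ≠ 0)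
    (h : B * B = (q ^ 2) • 1) (u : ℝ) :
    NormedSpace.exp (u • B) =
      Real.cosh (q * u) • 1 + (Real.sinh (q * u) / q) • B := by
  have hpow2 : ∀ k : ℕ, (u • B) ^ (2 * k) = ((q * u) ^ (2 * k)) • 1 := by
    intro k
    have : (u • B) ^ (2 * k) = ((u • B) ^ 2) ^ k := by rw [← pow_mul]
    rw [this]
    have h2 : (u • B) ^ 2 = ((q * u) ^ 2) • 1 := by
      rw [sq, smul_mul_smul_comm, h, smul_smul]; ring_nf
    simp [h2, smul_pow, ← pow_mul, mul_comm k 2]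
  have hpow2' : ∀ k : ℕ, (u • B) ^ (2 * k + 1) = (((q * u) ^ (2 * k)) * u) • B := by
    intro k
    rw [pow_succ, hpow2, smul_mul_assoc, one_mul, smul_smul]
  have hsum : HasSum (fun n : ℕ => ((n.factorial : ℝ))⁻¹ • (u • B) ^ n)
      (Real.cosh (q * u) • 1 + (Real.sinh (q * u) / q) • B) := by
    refine HasSum.even_add_odd ?_ ?_
    · have := (Real.hasSum_cosh (q * u)).smul_const (1 : Matrix (Fin 2) (Fin 2) ℝ)
      convert this using 2 with k
      rw [hpow2, smul_smul]
      congr 1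
      field_simp
    · have := (Real.hasSum_sinh (q * u)).smul_const ((1/q) • B)
      have h2 : Real.sinh (q * u) • ((1/q) • B) = (Real.sinh (q * u) / q) • B := by
        rw [smul_smul]; ring_nf
      rw [h2] at this
      convert this using 2 with k
      rw [hpow2', smul_smul, smul_smul]
      congr 1
      have : (q * u) ^ (2 * k + 1) = (q * u) ^ (2 * k) * (q * u) := pow_succ _ _
      field_simp
      ring
  simp only [NormedSpace.exp_eq_tsum ℝ]
  exact hsum.tsum_eq

lemma exp_smul_one' (c : ℝ) :
    NormedSpace.exp (c • (1 : Matrix (Fin 2) (Fin 2) ℝ)) = Real.exp c • 1 := by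
  have h0 : HasSum (fun n : ℕ => ((n.factorial : ℝ))⁻¹ • c ^ n) (Real.exp c) := by
    rw [Real.exp_eq_exp_ℝ]
    have := NormedSpace.expSeries_div_hasSum_exp c
    simpa [div_eq_inv_mul, smul_eq_mul] using this
  have h1 : HasSum (fun n : ℕ => ((n.factorial : ℝ))⁻¹ • ((c • (1 : Matrix (Fin 2) (Fin 2) ℝ)) ^ n))
      (Real.exp c • 1) := by
    have := h0.smul_const (1 : Matrix (Fin 2) (Fin 2) ℝ)
    convert this using 2 with n
    rw [smul_pow, one_pow, smul_smul]
    simp [smul_eq_mul]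
  simp only [NormedSpace.exp_eq_tsum ℝ]
  exact h1.tsum_eq

/-- Interpolation form of the OU covariance for 2×2 matrices: with
`a(t) = e^{st}(cosh(qt) − s·sinh(qt)/q)`, `b(t) = e^{st}·sinh(qt)/q`,
`s(t) = 1 − a(−2t)` and `i(t) = −(1/2)·b(−2t)`, one has
`(1/2)·A⁻¹·(I − exp(−2tA))·Σ = s(t)·(1/2)·A⁻¹Σ + i(t)·Σ`. -/
theorem ou_covariance_interpolation (A : Matrix (Fin 2) (Fin 2) ℝ)
    (hA : IsUnit A)
    (s : ℝ) (hs : s = A.trace / 2)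
    (hdet : (A - s • (1 : Matrix (Fin 2) (Fin 2) ℝ)).det < 0)
    (q : ℝ) (hq : q = Real.sqrt (-(A - s • (1 : Matrix (Fin 2) (Fin 2) ℝ)).det))
    (S : Matrix (Fin 2) (Fin 2) ℝ)
    (a b : ℝ → ℝ)
    (ha : ∀ t : ℝ, a t = Real.exp (s * t) * (Real.cosh (q * t) - s * Real.sinh (q * t) / q))
    (hb : ∀ t : ℝ, b t = Real.exp (s * t) * (Real.sinh (q * t) / q))
    (t : ℝ) :
    (1 / 2 : ℝ) • (A⁻¹ * (1 - NormedSpace.exp ((-(2 * t)) • A)) * S) =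
      (1 - a (-2 * t)) • ((1 / 2 : ℝ) • (A⁻¹ * S)) + (-(1 / 2 : ℝ) * b (-2 * t)) • S := by
  set B : Matrix (Fin 2) (Fin 2) ℝ := A - s • 1 with hB
  have hq0 : 0 < q := by
    rw [hq]; exact Real.sqrt_pos.2 (by linarith)
  have hq2 : q ^ 2 = -B.det := by
    rw [hq, Real.sq_sqrt (by linarith)]
  have htr : B 0 0 + B 1 1 = 0 := by
    have : A.trace = A 0 0 + A 1 1 := Matrix.trace_fin_two A
    simp [hB, Matrix.sub_apply, Matrix.smul_apply, Matrix.one_apply]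
    rw [this] at hs
    linarith
  have hBB : B * B = (q ^ 2) • (1 : Matrix (Fin 2) (Fin 2) ℝ) := by
    have hd : B.det = B 0 0 * B 1 1 - B 0 1 * B 1 0 := Matrix.det_fin_two B
    ext i j
    fin_cases i <;> fin_cases j <;>
      simp [Matrix.mul_apply, Fin.sum_univ_two, Matrix.one_apply, hq2, hd]
    · linear_combination (B 0 0) * htr
    · linear_combination (B 0 1) * htr
    · linear_combination (B 1 0) * htr
    · linear_combination (B 1 1) * htr
  have hu : ∀ u : ℝ, NormedSpace.exp (u • A) = a u • 1 + b u • A := by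
    intro u
    have hsplit : u • A = (u * s) • (1 : Matrix (Fin 2) (Fin 2) ℝ) + u • B := by
      rw [hB]; module
    have hcomm : Commute ((u * s) • (1 : Matrix (Fin 2) (Fin 2) ℝ)) (u • B) :=
      ((Commute.one_left _).smul_left _).smul_right _
    rw [hsplit, Matrix.exp_add_of_commute _ _ hcomm, exp_smul_one',
      exp_sq_smul_one B q (ne_of_gt hq0) hBB u, ha, hb, hB]
    rw [smul_mul_assoc, one_mul, mul_comm u s]
    module
  have hinv : A⁻¹ * A = 1 := Matrix.nonsing_inv_mul A ((Matrix.isUnit_iff_isUnit_det A).1 hA)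
  have hexp : NormedSpace.exp ((-(2 * t)) • A) = a (-2 * t) • 1 + b (-2 * t) • A := by
    rw [show (-2 * t : ℝ) = -(2 * t) by ring] at *
    exact hu _
  rw [hexp]
  have : A⁻¹ * (1 - (a (-2 * t) • 1 + b (-2 * t) • A)) * S
      = (1 - a (-2 * t)) • (A⁻¹ * S) - b (-2 * t) • S := by
    rw [Matrix.mul_sub, Matrix.mul_add, Matrix.mul_smul, Matrix.mul_smul, Matrix.mul_one, hinv]
    rw [Matrix.sub_mul, Matrix.add_mul, Matrix.smul_mul, Matrix.smul_mul, Matrix.one_mul]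
    rw [sub_smul, one_smul]
    abel
  rw [this]
  rw [smul_sub, smul_smul, smul_smul, smul_smul]
  rw [sub_eq_add_neg, ← neg_smul]
  congr 1 <;> ring_nf
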